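/- (Theorem 10, distribution relation for weight (α, β).) For every real q with 0 < q < 1, integers n ≥ 0, α ≥ 1, β ≥ 1, every real x ≥ 0, every odd positive integer d and Dirichlet character χ modulo d, Ẽ^χ_{n,q}(x | α : β) = ( [d:q^α]^n / [d:−q^β] ) · Σ_{a=0}^{d−1} (−1)^a q^{βa} χ(a) Ẽ_{n,q^d}( (x+a)/d | α : β ), where [d:−q^β] = ((−q^β)^d − 1)/(−q^β − 1) = (1 + q^{βd})/(1 + q^β). -/

import Mathlib

open scoped BigOperators

/-- `[x:q] = (q^x - 1)/(q - 1)` with real exponentiation. -/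
noncomputable def qNum (q x : ℝ) : ℝ := (q ^ x - 1) / (q - 1)

/-- `[d:-r] = ((-r)^d - 1)/(-r - 1)` for a natural number `d`. -/
noncomputable def qNumNeg (r : ℝ) (d : ℕ) : ℝ := ((-r) ^ d - 1) / (-r - 1)

/-- Weighted `q`-Euler polynomial with weight `(α, β)`:
`Ẽ_{n,q}(x|α:β) = [2:q^β] ∑_{m≥0} (-1)^m q^{βm} [m+x:q^α]^n`. -/
noncomputable def qEulerAB (q : ℝ) (α β n : ℕ) (x : ℝ) : ℝ :=
  qNum (q ^ β) 2 *
    ∑' m : ℕ, (-1 : ℝ) ^ m * q ^ (β * m) * (qNum (q ^ α) ((m : ℝ) + x)) ^ n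

/-- Dirichlet-type weighted `q`-Euler polynomial with weight `(α, β)`:
`Ẽ^χ_{n,q}(x|α:β) = [2:q^β] ∑_{m≥0} χ(m) (-1)^m q^{βm} [x+m:q^α]^n`. -/
noncomputable def qEulerChiAB (q : ℝ) (d : ℕ) (χ : DirichletCharacter ℂ d)
    (α β n : ℕ) (x : ℝ) : ℂ :=
  (qNum (q ^ β) 2 : ℂ) *
    ∑' m : ℕ, χ (m : ZMod d) * (-1 : ℂ) ^ m * (q : ℂ) ^ (β * m) *
      ((qNum (q ^ α) (x + (m : ℝ)) : ℝ) : ℂ) ^ n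

private lemma qNum_abs_le {r : ℝ} (hr0 : 0 < r) (hr1 : r < 1) {y : ℝ} (hy : 0 ≤ y) :
    |qNum r y| ≤ 1/(1-r) := by
  have h1 : r ^ y ≤ 1 := Real.rpow_le_one hr0.le hr1.le hy
  have h2 : 0 < r ^ y := Real.rpow_pos_of_pos hr0 y
  have heq : qNum r y = (1 - r ^ y)/(1 - r) := by
    rw [qNum, ← neg_sub 1 (r^y), ← neg_sub 1 r, neg_div_neg_eq]
  rw [heq, abs_of_nonneg (div_nonneg (by linarith) (by linarith))]
  gcongr
  · linarith

private lemma qNum_two {r : ℝ} (h : r ≠ 1) : qNum r 2 = r + 1 := by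
  have h2 : (2:ℝ) = ((2:ℕ):ℝ) := by norm_num
  rw [qNum, h2, Real.rpow_natCast]
  have h1 : r - 1 ≠ 0 := sub_ne_zero.mpr h
  field_simp
  ring

private lemma qNum_split (q x : ℝ) (hq0 : 0 < q) (hq1 : q < 1) (α d k a : ℕ)
    (hα : 1 ≤ α) (hd : 0 < d) :
    qNum (q^α) (x + ((k*d+a : ℕ):ℝ)) =
      qNum (q^α) (d:ℝ) * qNum ((q^d)^α) ((k:ℝ) + (x + (a:ℝ))/d) := by
  have hd' : (d:ℝ) ≠ 0 := Nat.cast_ne_zero.mpr hd.ne'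
  have hA0 : (0:ℝ) < q ^ α := pow_pos hq0 α
  have hA1 : q ^ α < 1 := pow_lt_one₀ hq0.le hq1 (by omega)
  have hAd1 : (q ^ α)^d < 1 := pow_lt_one₀ hA0.le hA1 hd.ne'
  have hAd0 : (0:ℝ) < (q ^ α)^d := pow_pos hA0 d
  have hBA : (q^d)^α = (q^α)^d := by rw [← pow_mul, ← pow_mul, Nat.mul_comm]
  have num : (q^α : ℝ) ^ (x + ((k*d+a:ℕ):ℝ)) = ((q^d)^α : ℝ) ^ ((k:ℝ) + (x + a)/d) := by
    rw [← pow_mul, ← Real.rpow_natCast q α, ← Real.rpow_natCast q (d*α),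
      ← Real.rpow_mul hq0.le, ← Real.rpow_mul hq0.le]
    congr 1
    push_cast
    field_simp
    ring
  unfold qNum
  rw [num, Real.rpow_natCast, hBA]
  have h1 : (q^α : ℝ) - 1 ≠ 0 := by intro h; nlinarith
  have h2 : ((q^α:ℝ))^d - 1 ≠ 0 := by intro h; nlinarith
  field_simp

private lemma summable_real_aux (q : ℝ) (hq0 : 0 < q) (hq1 : q < 1) (α β n : ℕ)
    (hα : 1 ≤ α) (hβ : 1 ≤ β) (y : ℝ) (hy : 0 ≤ y) :
    Summable (fun m : ℕ => (-1:ℝ)^m * q ^ (β*m) * (qNum (q^α) ((m:ℝ) + y))^n) := by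
  have hA0 : (0:ℝ) < q ^ α := pow_pos hq0 α
  have hA1 : q ^ α < 1 := pow_lt_one₀ hq0.le hq1 (by omega)
  apply Summable.of_norm_bounded (g := fun m => (1/(1 - q^α))^n * (q^β)^m)
    ((summable_geometric_of_lt_one (by positivity)
      (pow_lt_one₀ hq0.le hq1 (by omega))).mul_left _)
  intro m
  have h1 : |qNum (q^α) ((m:ℝ)+y)| ≤ 1/(1-q^α) := qNum_abs_le hA0 hA1 (by positivity)
  have heq : ‖(-1:ℝ)^m * q^(β*m) * (qNum (q^α) ((m:ℝ)+y))^n‖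
      = |qNum (q^α) ((m:ℝ)+y)|^n * (q^β)^m := by
    rw [Real.norm_eq_abs, abs_mul, abs_mul, abs_pow, abs_pow, abs_pow, abs_neg, abs_one,
      one_pow, one_mul, abs_of_pos hq0, pow_mul]
    ring
  rw [heq]
  gcongr

private lemma summable_cx_aux (q : ℝ) (hq0 : 0 < q) (hq1 : q < 1) (α β n d : ℕ)
    (hα : 1 ≤ α) (hβ : 1 ≤ β) (x : ℝ) (hx : 0 ≤ x) (χ : DirichletCharacter ℂ d) :
    Summable (fun m : ℕ => χ (m : ZMod d) * (-1:ℂ)^m * (q:ℂ)^(β*m) *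
      ((qNum (q^α) (x+(m:ℝ)):ℝ):ℂ)^n) := by
  have hA0 : (0:ℝ) < q ^ α := pow_pos hq0 α
  have hA1 : q ^ α < 1 := pow_lt_one₀ hq0.le hq1 (by omega)
  apply Summable.of_norm_bounded (g := fun m => (1/(1 - q^α))^n * (q^β)^m)
    ((summable_geometric_of_lt_one (by positivity)
      (pow_lt_one₀ hq0.le hq1 (by omega))).mul_left _)
  intro m
  have h1 : |qNum (q^α) (x+(m:ℝ))| ≤ 1/(1-q^α) := qNum_abs_le hA0 hA1 (by positivity)
  have heq : ‖χ (m : ZMod d) * (-1:ℂ)^m * (q:ℂ)^(β*m) * ((qNum (q^α) (x+(m:ℝ)):ℝ):ℂ)^n‖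
      = ‖χ (m : ZMod d)‖ * ((q^β)^m * |qNum (q^α) (x+(m:ℝ))|^n) := by
    rw [norm_mul, norm_mul, norm_mul, norm_pow, norm_pow, norm_pow, norm_neg, norm_one,
      one_pow, Complex.norm_real, Complex.norm_real, Real.norm_eq_abs, Real.norm_eq_abs,
      abs_of_pos hq0, pow_mul]
    ring
  rw [heq]
  calc ‖χ (m : ZMod d)‖ * ((q^β)^m * |qNum (q^α) (x+(m:ℝ))|^n)
      ≤ 1 * ((q^β)^m * (1/(1-q^α))^n) := by
        gcongr
        exact χ.norm_le_one _
    _ = (1/(1 - q^α))^n * (q^β)^m := by ring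

set_option maxHeartbeats 2000000 in
theorem statement18 (q : ℝ) (hq0 : 0 < q) (hq1 : q < 1)
    (n α β : ℕ) (hα : 1 ≤ α) (hβ : 1 ≤ β) (x : ℝ) (hx : 0 ≤ x)
    (d : ℕ) (hd0 : 0 < d) (hdo : Odd d) (χ : DirichletCharacter ℂ d) :
    qEulerChiAB q d χ α β n x =
      (((qNum (q ^ α) d) ^ n / qNumNeg (q ^ β) d : ℝ) : ℂ) *
        ∑ a ∈ Finset.range d,
          (-1 : ℂ) ^ a * (q : ℂ) ^ (β * a) * χ (a : ZMod d) *
            ((qEulerAB (q ^ d) α β n ((x + a) / d) : ℝ) : ℂ) := by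
  classical
  haveI : NeZero d := ⟨hd0.ne'⟩
  have hB0 : (0:ℝ) < q^β := pow_pos hq0 β
  have hB1 : q^β < 1 := pow_lt_one₀ hq0.le hq1 (by omega)
  have hd' : (0:ℝ) < (d:ℝ) := Nat.cast_pos.mpr hd0
  set F : ℕ → ℂ := fun m => χ (m : ZMod d) * (-1:ℂ)^m * (q:ℂ)^(β*m) *
      ((qNum (q^α) (x+(m:ℝ)):ℝ):ℂ)^n with hFdef
  set g : ℕ → ℂ := fun j => χ (j : ZMod d) * (-1:ℂ)^j * (q:ℂ)^(β*j) *
      ((qNum (q^α) (d:ℝ) : ℝ):ℂ)^n *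
      ((∑' k : ℕ, (-1:ℝ)^k * (q^d)^(β*k) *
        (qNum ((q^d)^α) ((k:ℝ) + (x+(j:ℝ))/d))^n : ℝ) : ℂ) with hgdef
  have hFs : Summable F := summable_cx_aux q hq0 hq1 α β n d hα hβ x hx χ
  have hG : Summable (fun p : ℕ × Fin d => F (p.1 * d + (p.2 : ℕ))) :=
    ((Nat.divModEquiv d).symm.summable_iff).mpr hFs
  have key : ∀ a : Fin d, (∑' k : ℕ, F (k*d+(a:ℕ))) = g (a:ℕ) := by
    intro a
    rw [hgdef]
    simp only
    rw [Complex.ofReal_tsum, ← tsum_mul_left]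
    refine tsum_congr fun k => ?_
    simp only [hFdef]
    have hchi : (((k*d+(a:ℕ) : ℕ)) : ZMod d) = ((a:ℕ) : ZMod d) := by
      push_cast
      simp
    have hneg : (-1:ℂ)^(k*d+(a:ℕ)) = (-1:ℂ)^(a:ℕ) * (-1:ℂ)^k := by
      rw [pow_add, mul_comm k d, pow_mul, hdo.neg_one_pow, mul_comm]
    have hpow : (q:ℂ)^(β*(k*d+(a:ℕ))) = (q:ℂ)^(β*(a:ℕ)) * ((q:ℂ)^d)^(β*k) := by
      rw [← pow_mul, ← pow_add]
      congr 1
      ring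
    have hsp := qNum_split q x hq0 hq1 α d k (a:ℕ) hα hd0
    rw [hchi, hneg, hpow, hsp]
    push_cast
    ring
  have hsummand : ∀ a : Fin d, Summable (fun k : ℕ => F (k*d+(a:ℕ))) := fun a =>
    hFs.comp_injective fun k1 k2 h =>
      Nat.eq_of_mul_eq_mul_right hd0 (Nat.add_right_cancel h)
  have hsum : (∑' m : ℕ, F m) = ∑ j ∈ Finset.range d, g j := by
    have h1 : (∑' m : ℕ, F m) = ∑' p : ℕ × Fin d, F (p.1 * d + (p.2 : ℕ)) := by
      rw [← ((Nat.divModEquiv d).symm.tsum_eq F)]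
      rfl
    have h2 : (∑' p : ℕ × Fin d, F (p.1 * d + (p.2 : ℕ)))
        = ∑' k : ℕ, ∑' a : Fin d, F (k*d+(a:ℕ)) := Summable.tsum_prod hG
    have h3 : (∑' k : ℕ, ∑' a : Fin d, F (k*d+(a:ℕ)))
        = ∑' k : ℕ, ∑ a : Fin d, F (k*d+(a:ℕ)) := tsum_congr fun k => tsum_fintype _
    have h4 : (∑' k : ℕ, ∑ a : Fin d, F (k*d+(a:ℕ)))
        = ∑ a : Fin d, ∑' k : ℕ, F (k*d+(a:ℕ)) := Summable.tsum_finsetSum fun a _ => hsummand a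
    rw [h1, h2, h3, h4, Finset.sum_congr rfl (fun a _ => key a),
      Fin.sum_univ_eq_sum_range g d]
  -- real scalar identity
  have hC1 : qNum (q^β) 2 = q^β + 1 := qNum_two hB1.ne
  have hC2 : qNum ((q^d)^β) 2 = (q^β)^d + 1 := by
    rw [qNum_two (by
      have : (q^d)^β < 1 := pow_lt_one₀ (pow_pos hq0 d).le (pow_lt_one₀ hq0.le hq1 hd0.ne') (by omega)
      exact this.ne)]
    rw [← pow_mul, ← pow_mul, Nat.mul_comm]
  have hN : qNumNeg (q^β) d = ((q^β)^d+1)/(q^β+1) := by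
    rw [qNumNeg, hdo.neg_pow, show (-(q^β)^d - 1 : ℝ) = -((q^β)^d+1) by ring,
      show (-(q^β)-1 : ℝ) = -((q^β)+1) by ring, neg_div_neg_eq]
  have hne1 : (q^β : ℝ) + 1 ≠ 0 := by positivity
  have hne2 : ((q^β : ℝ))^d + 1 ≠ 0 := by positivity
  have h5 : ∀ S : ℝ, qNum (q^α) (d:ℝ) ^ n / qNumNeg (q^β) d * (qNum ((q^d)^β) 2 * S)
      = qNum (q^β) 2 * (qNum (q^α) (d:ℝ) ^ n * S) := by
    intro S
    rw [hC1, hC2, hN]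
    field_simp
  have h5c : ∀ S : ℝ, ((qNum (q^α) (d:ℝ) ^ n / qNumNeg (q^β) d : ℝ) : ℂ) *
      ((qNum ((q^d)^β) 2 * S : ℝ) : ℂ)
      = ((qNum (q^β) 2 : ℝ):ℂ) * (((qNum (q^α) (d:ℝ) : ℝ):ℂ))^n * ((S:ℝ):ℂ) := by
    intro S
    rw [← Complex.ofReal_mul, h5 S]
    push_cast
    ring
  rw [qEulerChiAB]
  rw [show (∑' m : ℕ, χ (m : ZMod d) * (-1 : ℂ) ^ m * (q : ℂ) ^ (β * m) *
      ((qNum (q ^ α) (x + (m : ℝ)) : ℝ) : ℂ) ^ n) = ∑' m : ℕ, F m from rfl, hsum,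
    Finset.mul_sum, Finset.mul_sum]
  refine Finset.sum_congr rfl fun j hj => ?_
  rw [hgdef]
  simp only [qEulerAB]
  linear_combination (-(χ (j : ZMod d) * (-1:ℂ)^j * (q:ℂ)^(β*j))) *
    h5c (∑' k : ℕ, (-1:ℝ)^k * (q^d)^(β*k) * (qNum ((q^d)^α) ((k:ℝ) + (x+(j:ℝ))/d))^n)
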